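/- Let n ≥ 4, (λ, ξ) ∈ Λ = {(0,0), (1,0), (1,1), (2,0), (2,√3), (2,2)}, let ∇ be the bilinear map on 𝔤 satisfying the Koszul formula for ⟨·,·⟩_{λ,ξ}, and let R(X,Y)Z := ∇_X(∇_YZ) − ∇_Y(∇_XZ) − ∇_{[X,Y]}Z. Then R(X,Y)Z = 0 for all X, Y, Z ∈ 𝔤 if and only if (λ, ξ) = (1, 0). (That is, exactly one of the six left-invariant Lorentzian metrics on H₃ × ℝ^{n−3} is flat.) -/

import Mathlib

open Matrix

noncomputable section

/-- The Lie bracket of `𝔥₃ ⊕ ℝ^{n-3}` on `ℝⁿ`: `[x, y] = (x₁y₂ - x₂y₁) • eₙ`. -/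
def bral (n : ℕ) (hn : 4 ≤ n) (x y : Fin n → ℝ) : Fin n → ℝ :=
  (x ⟨0, by omega⟩ * y ⟨1, by omega⟩ - x ⟨1, by omega⟩ * y ⟨0, by omega⟩) •
    (Pi.single (⟨n - 1, by omega⟩ : Fin n) (1 : ℝ) : Fin n → ℝ)

/-- The matrix `I_{n-1,1} = diag(1, …, 1, -1)`. -/
def Inm (n : ℕ) : Matrix (Fin n) (Fin n) ℝ :=
  Matrix.diagonal fun i => if (i : ℕ) < n - 1 then 1 else -1

/-- `ε_i = 1` for `i ≤ n-1` (1-based), `ε_n = -1`. -/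
def eps (n : ℕ) (i : Fin n) : ℝ := if (i : ℕ) < n - 1 then 1 else -1

/-- The canonical inner product of signature `(n-1,1)`: `⟨x,y⟩₀ = xᵀ I_{n-1,1} y`. -/
def ip0 (n : ℕ) (x y : Fin n → ℝ) : ℝ := ∑ i : Fin n, eps n i * x i * y i

/-- The indefinite orthogonal group `O(n-1,1)`. -/
def Oset (n : ℕ) : Set (Matrix (Fin n) (Fin n) ℝ) := {k | kᵀ * Inm n * k = Inm n}

/-- The group `ℝ^× · Aut(𝔥₃ ⊕ ℝ^{n-3})`: invertible block lower triangular matrices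
with diagonal blocks of sizes `(2, n-3, 1)`. -/
def Hset (n : ℕ) : Set (Matrix (Fin n) (Fin n) ℝ) :=
  {A | IsUnit A.det ∧ ∀ i j : Fin n,
    ((i : ℕ) < 2 ∧ 2 ≤ (j : ℕ)) ∨ ((i : ℕ) < n - 1 ∧ (j : ℕ) = n - 1) → A i j = 0}

/-- `H' = {hᵀ : h ∈ H}`. -/
def Hset' (n : ℕ) : Set (Matrix (Fin n) (Fin n) ℝ) := {A | Aᵀ ∈ Hset n}

/-- `G_λ`: invertible matrices with last column `eₙ` and last row `(-λ, 0, …, 0, 1)`. -/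
def Glam (n : ℕ) (hn : 4 ≤ n) (lam : ℝ) : Set (Matrix (Fin n) (Fin n) ℝ) :=
  {g | IsUnit g.det ∧
    (∀ i : Fin n, g i ⟨n - 1, by omega⟩ = if (i : ℕ) = n - 1 then 1 else 0) ∧
    (∀ j : Fin n, g ⟨n - 1, by omega⟩ j =
      if (j : ℕ) = n - 1 then 1 else if (j : ℕ) = 0 then -lam else 0)}

/-- The matrix `g_{λ,ξ}`: the identity except that the `(1, n-1)` entry is `ξ` and
the `(1, n)` entry is `λ`. -/
def gmat (n : ℕ) (hn : 4 ≤ n) (lam xi : ℝ) : Matrix (Fin n) (Fin n) ℝ :=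
  1 + Matrix.single ⟨0, by omega⟩ ⟨n - 2, by omega⟩ xi
    + Matrix.single ⟨0, by omega⟩ ⟨n - 1, by omega⟩ lam

/-- The inner product `⟨x,y⟩_{λ,ξ} = ⟨g_{λ,ξ}⁻¹x, g_{λ,ξ}⁻¹y⟩₀`. -/
def ipg (n : ℕ) (hn : 4 ≤ n) (lam xi : ℝ) (x y : Fin n → ℝ) : ℝ :=
  ip0 n ((gmat n hn lam xi)⁻¹.mulVec x) ((gmat n hn lam xi)⁻¹.mulVec y)

/-- `x'_i = g_{λ,ξ} e_i`. -/
def xvec (n : ℕ) (hn : 4 ≤ n) (lam xi : ℝ) (i : Fin n) : Fin n → ℝ :=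
  (gmat n hn lam xi).mulVec (Pi.single i 1)

/-- The parameter set `Λ = {(0,0), (1,0), (1,1), (2,0), (2,√3), (2,2)}`. -/
def Lam : Set (ℝ × ℝ) :=
  {(0, 0), (1, 0), (1, 1), (2, 0), (2, Real.sqrt 3), (2, 2)}

def uu (n : ℕ) (hn : 4 ≤ n) (lam xi : ℝ) (z : Fin n → ℝ) : ℝ :=
  z ⟨0, by omega⟩ - xi * z ⟨n - 2, by omega⟩ - lam * z ⟨n - 1, by omega⟩

def ph (n : ℕ) (hn : 4 ≤ n) (lam xi : ℝ) (z : Fin n → ℝ) : ℝ :=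
  -(z ⟨n - 1, by omega⟩) - lam * uu n hn lam xi z

lemma gmat_inv (n : ℕ) (hn : 4 ≤ n) (lam xi : ℝ) :
    (gmat n hn lam xi)⁻¹
      = 1 - Matrix.single ⟨0, by omega⟩ ⟨n - 2, by omega⟩ xi
          - Matrix.single ⟨0, by omega⟩ ⟨n - 1, by omega⟩ lam := by
  apply Matrix.inv_eq_right_inv
  have h2 : (⟨n - 2, by omega⟩ : Fin n) ≠ ⟨0, by omega⟩ := by
    simp only [ne_eq, Fin.mk.injEq]; omega
  have h3 : (⟨n - 1, by omega⟩ : Fin n) ≠ ⟨0, by omega⟩ := by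
    simp only [ne_eq, Fin.mk.injEq]; omega
  unfold gmat
  simp only [mul_sub, add_mul, one_mul, mul_one,
    Matrix.single_mul_single_of_ne, h2, h3, ne_eq, not_false_eq_true]
  abel
lemma ginv_mulVec (n : ℕ) (hn : 4 ≤ n) (lam xi : ℝ) (z : Fin n → ℝ) (i : Fin n) :
    (gmat n hn lam xi)⁻¹.mulVec z i
      = if i = (⟨0, by omega⟩ : Fin n) then uu n hn lam xi z else z i := by
  rw [gmat_inv]
  rw [Matrix.sub_mulVec, Matrix.sub_mulVec, Matrix.one_mulVec,
    Matrix.single_mulVec, Matrix.single_mulVec]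
  simp only [Pi.sub_apply, Function.update_apply, Pi.zero_apply, uu]
  by_cases h : i = (⟨0, by omega⟩ : Fin n)
  · subst h; simp only [if_pos, ite_true, if_true]; try ring
  · simp only [if_neg h]; ring

lemma ip0_single_left (n : ℕ) (j : Fin n) (c : ℝ) (z : Fin n → ℝ) :
    ip0 n (Pi.single j c) z = eps n j * c * z j := by
  unfold ip0
  rw [Finset.sum_eq_single j]
  · rw [Pi.single_eq_same]
  · intro b _ hb; rw [Pi.single_eq_of_ne hb]; ring
  · intro hj; exact absurd (Finset.mem_univ j) hj

lemma ip0_single_right (n : ℕ) (j : Fin n) (c : ℝ) (z : Fin n → ℝ) :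
    ip0 n z (Pi.single j c) = eps n j * c * z j := by
  unfold ip0
  rw [Finset.sum_eq_single j]
  · rw [Pi.single_eq_same]; ring
  · intro b _ hb; rw [Pi.single_eq_of_ne hb]; ring
  · intro hj; exact absurd (Finset.mem_univ j) hj

lemma ipg_eq (n : ℕ) (hn : 4 ≤ n) (lam xi : ℝ) (x y : Fin n → ℝ) :
    ipg n hn lam xi x y
      = ip0 n x y - x ⟨0, by omega⟩ * y ⟨0, by omega⟩
        + uu n hn lam xi x * uu n hn lam xi y := by
  unfold ipg
  unfold ip0
  simp only [ginv_mulVec]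
  rw [← Finset.sum_erase_add _ _ (Finset.mem_univ (⟨0, by omega⟩ : Fin n)),
    ← Finset.sum_erase_add _ _ (Finset.mem_univ (⟨0, by omega⟩ : Fin n))]
  have hsum : ∑ i ∈ Finset.univ.erase (⟨0, by omega⟩ : Fin n),
      eps n i * (if i = (⟨0, by omega⟩ : Fin n) then uu n hn lam xi x else x i)
        * (if i = (⟨0, by omega⟩ : Fin n) then uu n hn lam xi y else y i)
      = ∑ i ∈ Finset.univ.erase (⟨0, by omega⟩ : Fin n), eps n i * x i * y i := by
    refine Finset.sum_congr rfl fun i hi => ?_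
    have : i ≠ (⟨0, by omega⟩ : Fin n) := Finset.ne_of_mem_erase hi
    rw [if_neg this, if_neg this]
  rw [hsum]
  have heps : eps n (⟨0, by omega⟩ : Fin n) = 1 := by
    unfold eps; rw [if_pos]; show 0 < n - 1; omega
  rw [if_pos rfl, if_pos rfl, heps]
  ring
lemma ip0_add_left (n : ℕ) (x y z : Fin n → ℝ) :
    ip0 n (x + y) z = ip0 n x z + ip0 n y z := by
  unfold ip0
  rw [← Finset.sum_add_distrib]
  refine Finset.sum_congr rfl fun i _ => ?_
  simp only [Pi.add_apply]; ring

lemma ip0_sub_left (n : ℕ) (x y z : Fin n → ℝ) :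
    ip0 n (x - y) z = ip0 n x z - ip0 n y z := by
  unfold ip0
  rw [← Finset.sum_sub_distrib]
  refine Finset.sum_congr rfl fun i _ => ?_
  simp only [Pi.sub_apply]; ring

lemma ip0_smul_left (n : ℕ) (c : ℝ) (x z : Fin n → ℝ) :
    ip0 n (c • x) z = c * ip0 n x z := by
  unfold ip0
  rw [Finset.mul_sum]
  refine Finset.sum_congr rfl fun i _ => ?_
  simp only [Pi.smul_apply, smul_eq_mul]; ring

lemma ipg_sub_left (n : ℕ) (hn : 4 ≤ n) (lam xi : ℝ) (x y z : Fin n → ℝ) :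
    ipg n hn lam xi (x - y) z = ipg n hn lam xi x z - ipg n hn lam xi y z := by
  rw [ipg_eq, ipg_eq, ipg_eq, ip0_sub_left]
  unfold uu
  simp only [Pi.sub_apply]
  ring

lemma ipg_smul_left (n : ℕ) (hn : 4 ≤ n) (lam xi : ℝ) (c : ℝ) (x z : Fin n → ℝ) :
    ipg n hn lam xi (c • x) z = c * ipg n hn lam xi x z := by
  rw [ipg_eq, ipg_eq, ip0_smul_left]
  unfold uu
  simp only [Pi.smul_apply, smul_eq_mul]
  ring

lemma ipg_add_left (n : ℕ) (hn : 4 ≤ n) (lam xi : ℝ) (x y z : Fin n → ℝ) :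
    ipg n hn lam xi (x + y) z = ipg n hn lam xi x z + ipg n hn lam xi y z := by
  rw [ipg_eq, ipg_eq, ipg_eq, ip0_add_left]
  unfold uu
  simp only [Pi.add_apply]
  ring

-- evaluations of `uu` on the basic single vectors
lemma uu_single0 (n : ℕ) (hn : 4 ≤ n) (lam xi : ℝ) (c : ℝ) :
    uu n hn lam xi (Pi.single (⟨0, by omega⟩ : Fin n) c) = c := by
  unfold uu
  rw [Pi.single_eq_same, Pi.single_eq_of_ne (by simp only [ne_eq, Fin.mk.injEq]; omega),
    Pi.single_eq_of_ne (by simp only [ne_eq, Fin.mk.injEq]; omega)]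
  ring

lemma uu_single1 (n : ℕ) (hn : 4 ≤ n) (lam xi : ℝ) (c : ℝ) :
    uu n hn lam xi (Pi.single (⟨1, by omega⟩ : Fin n) c) = 0 := by
  unfold uu
  rw [Pi.single_eq_of_ne (by simp only [ne_eq, Fin.mk.injEq]; omega),
    Pi.single_eq_of_ne (by simp only [ne_eq, Fin.mk.injEq]; omega),
    Pi.single_eq_of_ne (by simp only [ne_eq, Fin.mk.injEq]; omega)]
  ring

lemma uu_single2 (n : ℕ) (hn : 4 ≤ n) (lam xi : ℝ) (c : ℝ) :
    uu n hn lam xi (Pi.single (⟨n - 2, by omega⟩ : Fin n) c) = -(xi * c) := by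
  unfold uu
  rw [Pi.single_eq_same, Pi.single_eq_of_ne (by simp only [ne_eq, Fin.mk.injEq]; omega),
    Pi.single_eq_of_ne (by simp only [ne_eq, Fin.mk.injEq]; omega)]
  ring

lemma uu_single3 (n : ℕ) (hn : 4 ≤ n) (lam xi : ℝ) (c : ℝ) :
    uu n hn lam xi (Pi.single (⟨n - 1, by omega⟩ : Fin n) c) = -(lam * c) := by
  unfold uu
  rw [Pi.single_eq_same, Pi.single_eq_of_ne (by simp only [ne_eq, Fin.mk.injEq]; omega),
    Pi.single_eq_of_ne (by simp only [ne_eq, Fin.mk.injEq]; omega)]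
  ring

lemma eps0 (n : ℕ) (hn : 4 ≤ n) : eps n (⟨0, by omega⟩ : Fin n) = 1 := by
  unfold eps; rw [if_pos]; show 0 < n - 1; omega

lemma eps1 (n : ℕ) (hn : 4 ≤ n) : eps n (⟨1, by omega⟩ : Fin n) = 1 := by
  unfold eps; rw [if_pos]; show 1 < n - 1; omega

lemma eps2 (n : ℕ) (hn : 4 ≤ n) : eps n (⟨n - 2, by omega⟩ : Fin n) = 1 := by
  unfold eps; rw [if_pos]; show n - 2 < n - 1; omega

lemma eps3 (n : ℕ) (hn : 4 ≤ n) : eps n (⟨n - 1, by omega⟩ : Fin n) = -1 := by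
  unfold eps; rw [if_neg]; show ¬(n - 1 < n - 1); omega

lemma ipg_P0 (n : ℕ) (hn : 4 ≤ n) (lam xi : ℝ) (c : ℝ) (z : Fin n → ℝ) :
    ipg n hn lam xi (Pi.single (⟨0, by omega⟩ : Fin n) c) z = c * uu n hn lam xi z := by
  rw [ipg_eq, ip0_single_left, uu_single0, eps0 n hn, Pi.single_eq_same]
  ring

lemma ipg_P1 (n : ℕ) (hn : 4 ≤ n) (lam xi : ℝ) (c : ℝ) (z : Fin n → ℝ) :
    ipg n hn lam xi (Pi.single (⟨1, by omega⟩ : Fin n) c) z = c * z ⟨1, by omega⟩ := by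
  rw [ipg_eq, ip0_single_left, uu_single1, eps1 n hn,
    Pi.single_eq_of_ne (by simp only [ne_eq, Fin.mk.injEq]; omega)]
  ring

lemma ipg_P2 (n : ℕ) (hn : 4 ≤ n) (lam xi : ℝ) (c : ℝ) (z : Fin n → ℝ) :
    ipg n hn lam xi (Pi.single (⟨n - 2, by omega⟩ : Fin n) c) z
      = c * (z ⟨n - 2, by omega⟩ - xi * uu n hn lam xi z) := by
  rw [ipg_eq, ip0_single_left, uu_single2, eps2 n hn,
    Pi.single_eq_of_ne (by simp only [ne_eq, Fin.mk.injEq]; omega)]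
  ring

lemma ipg_P3 (n : ℕ) (hn : 4 ≤ n) (lam xi : ℝ) (c : ℝ) (z : Fin n → ℝ) :
    ipg n hn lam xi (Pi.single (⟨n - 1, by omega⟩ : Fin n) c) z
      = c * ph n hn lam xi z := by
  rw [ipg_eq, ip0_single_left, uu_single3, eps3 n hn,
    Pi.single_eq_of_ne (by simp only [ne_eq, Fin.mk.injEq]; omega)]
  unfold ph
  ring

lemma ipg_nondeg (n : ℕ) (hn : 4 ≤ n) (lam xi : ℝ) (x : Fin n → ℝ)
    (h : ∀ z : Fin n → ℝ, ipg n hn lam xi x z = 0) : x = 0 := by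
  have hu : uu n hn lam xi x = 0 := by
    have h0 := h (Pi.single (⟨0, by omega⟩ : Fin n) 1)
    rw [ipg_eq, ip0_single_right, uu_single0, eps0 n hn, Pi.single_eq_same] at h0
    linarith
  have hj : ∀ j : Fin n, j ≠ (⟨0, by omega⟩ : Fin n) → x j = 0 := by
    intro j hjne
    have h0 := h (Pi.single j 1)
    rw [ipg_eq, ip0_single_right, hu, Pi.single_eq_of_ne (Ne.symm hjne)] at h0
    have : eps n j * 1 * x j = 0 := by linarith
    unfold eps at this
    rcases lt_or_ge (j : ℕ) (n - 1) with hc | hc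
    · rw [if_pos hc] at this; linarith
    · rw [if_neg (by omega)] at this; linarith
  funext i
  by_cases hi : i = (⟨0, by omega⟩ : Fin n)
  · subst hi
    have h2 := hj ⟨n - 2, by omega⟩ (by simp only [ne_eq, Fin.mk.injEq]; omega)
    have h3 := hj ⟨n - 1, by omega⟩ (by simp only [ne_eq, Fin.mk.injEq]; omega)
    unfold uu at hu
    rw [h2, h3] at hu
    simp only [Pi.zero_apply]
    linarith
  · simp only [Pi.zero_apply]
    exact hj i hi
def wb (n : ℕ) (hn : 4 ≤ n) (X Y : Fin n → ℝ) : ℝ :=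
  X ⟨0, by omega⟩ * Y ⟨1, by omega⟩ - X ⟨1, by omega⟩ * Y ⟨0, by omega⟩

def wA (n : ℕ) (hn : 4 ≤ n) (lam xi : ℝ) (X Y : Fin n → ℝ) : ℝ :=
  Y ⟨1, by omega⟩ * ph n hn lam xi X + X ⟨1, by omega⟩ * ph n hn lam xi Y

def wB (n : ℕ) (hn : 4 ≤ n) (lam xi : ℝ) (X Y : Fin n → ℝ) : ℝ :=
  -(X ⟨0, by omega⟩ * ph n hn lam xi Y) - Y ⟨0, by omega⟩ * ph n hn lam xi X

/-- The Levi-Civita connection of `⟨·,·⟩_{λ,ξ}` in explicit form. -/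
def Wv (n : ℕ) (hn : 4 ≤ n) (lam xi : ℝ) (X Y : Fin n → ℝ) : Fin n → ℝ :=
  ((1 + xi ^ 2 - lam ^ 2) * wA n hn lam xi X Y / 2)
      • (Pi.single (⟨0, by omega⟩ : Fin n) (1 : ℝ) : Fin n → ℝ)
  + (wB n hn lam xi X Y / 2) • (Pi.single (⟨1, by omega⟩ : Fin n) (1 : ℝ) : Fin n → ℝ)
  + (xi * wA n hn lam xi X Y / 2) • (Pi.single (⟨n - 2, by omega⟩ : Fin n) (1 : ℝ) : Fin n → ℝ)
  + ((wb n hn X Y - lam * wA n hn lam xi X Y) / 2)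
      • (Pi.single (⟨n - 1, by omega⟩ : Fin n) (1 : ℝ) : Fin n → ℝ)

lemma ipg_Wv (n : ℕ) (hn : 4 ≤ n) (lam xi : ℝ) (X Y z : Fin n → ℝ) :
    ipg n hn lam xi (Wv n hn lam xi X Y) z
      = ((1 + xi ^ 2 - lam ^ 2) * wA n hn lam xi X Y / 2) * uu n hn lam xi z
        + (wB n hn lam xi X Y / 2) * z ⟨1, by omega⟩
        + (xi * wA n hn lam xi X Y / 2) * (z ⟨n - 2, by omega⟩ - xi * uu n hn lam xi z)
        + ((wb n hn X Y - lam * wA n hn lam xi X Y) / 2) * ph n hn lam xi z := by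
  unfold Wv
  rw [ipg_add_left, ipg_add_left, ipg_add_left, ipg_smul_left, ipg_smul_left,
    ipg_smul_left, ipg_smul_left, ipg_P0, ipg_P1, ipg_P2, ipg_P3]
  ring

lemma ipg_bral (n : ℕ) (hn : 4 ≤ n) (lam xi : ℝ) (X Y z : Fin n → ℝ) :
    ipg n hn lam xi (bral n hn X Y) z = wb n hn X Y * ph n hn lam xi z := by
  unfold bral
  rw [ipg_smul_left, ipg_P3]
  unfold wb
  ring

lemma nab_eq (n : ℕ) (hn : 4 ≤ n) (lam xi : ℝ)
    (f : (Fin n → ℝ) → (Fin n → ℝ) → (Fin n → ℝ))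
    (hK : ∀ X Y Z : Fin n → ℝ,
      2 * ipg n hn lam xi (f X Y) Z
        = ipg n hn lam xi (bral n hn X Y) Z - ipg n hn lam xi (bral n hn Y Z) X
          + ipg n hn lam xi (bral n hn Z X) Y)
    (X Y : Fin n → ℝ) : f X Y = Wv n hn lam xi X Y := by
  have hz : ∀ z : Fin n → ℝ, ipg n hn lam xi (f X Y - Wv n hn lam xi X Y) z = 0 := by
    intro z
    rw [ipg_sub_left, ipg_Wv]
    have h1 := hK X Y z
    rw [ipg_bral, ipg_bral, ipg_bral] at h1
    have h2 : 2 * (((1 + xi ^ 2 - lam ^ 2) * wA n hn lam xi X Y / 2) * uu n hn lam xi z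
        + (wB n hn lam xi X Y / 2) * z ⟨1, by omega⟩
        + (xi * wA n hn lam xi X Y / 2) * (z ⟨n - 2, by omega⟩ - xi * uu n hn lam xi z)
        + ((wb n hn X Y - lam * wA n hn lam xi X Y) / 2) * ph n hn lam xi z)
        = wb n hn X Y * ph n hn lam xi z - wb n hn Y z * ph n hn lam xi X
          + wb n hn z X * ph n hn lam xi Y := by
      unfold wb wA wB ph uu
      ring
    linarith
  exact sub_eq_zero.mp (ipg_nondeg n hn lam xi _ hz)
lemma flat10 (n : ℕ) (hn : 4 ≤ n) (X Y Z : Fin n → ℝ) :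
    Wv n hn 1 0 X (Wv n hn 1 0 Y Z) - Wv n hn 1 0 Y (Wv n hn 1 0 X Z)
      - Wv n hn 1 0 (bral n hn X Y) Z = 0 := by
  funext i
  simp only [Wv, wA, wB, wb, ph, uu, bral, Pi.add_apply, Pi.sub_apply, Pi.smul_apply,
    smul_eq_mul, Pi.zero_apply]
  simp only [Pi.single_apply, Fin.mk.injEq,
    show (0 : ℕ) ≠ 1 by omega, show (1 : ℕ) ≠ 0 by omega,
    show (0 : ℕ) ≠ n - 2 by omega, show (n - 2 : ℕ) ≠ 0 by omega,
    show (0 : ℕ) ≠ n - 1 by omega, show (n - 1 : ℕ) ≠ 0 by omega,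
    show (1 : ℕ) ≠ n - 2 by omega, show (n - 2 : ℕ) ≠ 1 by omega,
    show (1 : ℕ) ≠ n - 1 by omega, show (n - 1 : ℕ) ≠ 1 by omega,
    show (n - 2 : ℕ) ≠ n - 1 by omega, show (n - 1 : ℕ) ≠ n - 2 by omega,
    if_true, if_false, ite_true, ite_false, mul_one, mul_zero, zero_mul, one_mul,
    add_zero, zero_add, neg_zero, sub_zero, zero_sub]
  ring
set_option maxHeartbeats 1000000 in
lemma curvA (n : ℕ) (hn : 4 ≤ n) (lam xi : ℝ) :
    (Wv n hn lam xi (Pi.single (⟨0, by omega⟩ : Fin n) 1)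
        (Wv n hn lam xi (Pi.single (⟨1, by omega⟩ : Fin n) 1)
          (Pi.single (⟨1, by omega⟩ : Fin n) 1))
      - Wv n hn lam xi (Pi.single (⟨1, by omega⟩ : Fin n) 1)
        (Wv n hn lam xi (Pi.single (⟨0, by omega⟩ : Fin n) 1)
          (Pi.single (⟨1, by omega⟩ : Fin n) 1))
      - Wv n hn lam xi
          (bral n hn (Pi.single (⟨0, by omega⟩ : Fin n) 1)
            (Pi.single (⟨1, by omega⟩ : Fin n) 1))
          (Pi.single (⟨1, by omega⟩ : Fin n) 1)) (⟨0, by omega⟩ : Fin n)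
      = -3 * (1 + xi ^ 2 - lam ^ 2) * (lam ^ 2 - 1) / 4 := by
  simp only [Wv, wA, wB, wb, ph, uu, bral, Pi.add_apply, Pi.sub_apply, Pi.smul_apply,
    smul_eq_mul, Pi.zero_apply]
  simp only [Pi.single_apply, Fin.mk.injEq,
    show (0 : ℕ) ≠ 1 by omega, show (1 : ℕ) ≠ 0 by omega,
    show (0 : ℕ) ≠ n - 2 by omega, show (n - 2 : ℕ) ≠ 0 by omega,
    show (0 : ℕ) ≠ n - 1 by omega, show (n - 1 : ℕ) ≠ 0 by omega,
    show (1 : ℕ) ≠ n - 2 by omega, show (n - 2 : ℕ) ≠ 1 by omega,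
    show (1 : ℕ) ≠ n - 1 by omega, show (n - 1 : ℕ) ≠ 1 by omega,
    show (n - 2 : ℕ) ≠ n - 1 by omega, show (n - 1 : ℕ) ≠ n - 2 by omega]
  norm_num
  ring

set_option maxHeartbeats 1000000 in
lemma curvB (n : ℕ) (hn : 4 ≤ n) (lam xi : ℝ) :
    (Wv n hn lam xi (Pi.single (⟨0, by omega⟩ : Fin n) 1)
        (Wv n hn lam xi (Pi.single (⟨1, by omega⟩ : Fin n) 1)
          (Pi.single (⟨1, by omega⟩ : Fin n) 1))
      - Wv n hn lam xi (Pi.single (⟨1, by omega⟩ : Fin n) 1)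
        (Wv n hn lam xi (Pi.single (⟨0, by omega⟩ : Fin n) 1)
          (Pi.single (⟨1, by omega⟩ : Fin n) 1))
      - Wv n hn lam xi
          (bral n hn (Pi.single (⟨0, by omega⟩ : Fin n) 1)
            (Pi.single (⟨1, by omega⟩ : Fin n) 1))
          (Pi.single (⟨1, by omega⟩ : Fin n) 1)) (⟨n - 1, by omega⟩ : Fin n)
      = lam * (4 * lam ^ 2 - xi ^ 2 - 4) / 4 := by
  simp only [Wv, wA, wB, wb, ph, uu, bral, Pi.add_apply, Pi.sub_apply, Pi.smul_apply,
    smul_eq_mul, Pi.zero_apply]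
  simp only [Pi.single_apply, Fin.mk.injEq,
    show (0 : ℕ) ≠ 1 by omega, show (1 : ℕ) ≠ 0 by omega,
    show (0 : ℕ) ≠ n - 2 by omega, show (n - 2 : ℕ) ≠ 0 by omega,
    show (0 : ℕ) ≠ n - 1 by omega, show (n - 1 : ℕ) ≠ 0 by omega,
    show (1 : ℕ) ≠ n - 2 by omega, show (n - 2 : ℕ) ≠ 1 by omega,
    show (1 : ℕ) ≠ n - 1 by omega, show (n - 1 : ℕ) ≠ 1 by omega,
    show (n - 2 : ℕ) ≠ n - 1 by omega, show (n - 1 : ℕ) ≠ n - 2 by omega]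
  norm_num
  ring
/-- for `(λ,ξ) ∈ Λ`, the curvature tensor of `(𝔤, ⟨·,·⟩_{λ,ξ})` vanishes
identically if and only if `(λ,ξ) = (1,0)`; exactly one of the six left-invariant
Lorentzian metrics on `H₃ × ℝ^{n-3}` is flat. -/
theorem stmt16 (n : ℕ) (hn : 4 ≤ n) (lam xi : ℝ) (hmem : (lam, xi) ∈ Lam)
    (nab : (Fin n → ℝ) →ₗ[ℝ] (Fin n → ℝ) →ₗ[ℝ] (Fin n → ℝ))
    (hK : ∀ X Y Z : Fin n → ℝ,
      2 * ipg n hn lam xi (nab X Y) Z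
        = ipg n hn lam xi (bral n hn X Y) Z - ipg n hn lam xi (bral n hn Y Z) X
          + ipg n hn lam xi (bral n hn Z X) Y) :
    (∀ X Y Z : Fin n → ℝ,
        nab X (nab Y Z) - nab Y (nab X Z) - nab (bral n hn X Y) Z = 0)
      ↔ (lam = 1 ∧ xi = 0) := by
  have he : ∀ X Y : Fin n → ℝ, nab X Y = Wv n hn lam xi X Y := fun X Y =>
    nab_eq n hn lam xi (fun a b => nab a b) hK X Y
  constructor
  · intro h
    simp only [he] at h
    have hA : -3 * (1 + xi ^ 2 - lam ^ 2) * (lam ^ 2 - 1) / 4 = 0 := by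
      rw [← curvA n hn lam xi,
        h (Pi.single (⟨0, by omega⟩ : Fin n) 1) (Pi.single (⟨1, by omega⟩ : Fin n) 1)
          (Pi.single (⟨1, by omega⟩ : Fin n) 1)]
      rfl
    have hB : lam * (4 * lam ^ 2 - xi ^ 2 - 4) / 4 = 0 := by
      rw [← curvB n hn lam xi,
        h (Pi.single (⟨0, by omega⟩ : Fin n) 1) (Pi.single (⟨1, by omega⟩ : Fin n) 1)
          (Pi.single (⟨1, by omega⟩ : Fin n) 1)]
      rfl
    simp only [Lam, Set.mem_insert_iff, Set.mem_singleton_iff, Prod.mk.injEq] at hmem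
    have hsq : Real.sqrt 3 ^ 2 = 3 := Real.sq_sqrt (by norm_num)
    rcases hmem with ⟨h1, h2⟩ | ⟨h1, h2⟩ | ⟨h1, h2⟩ | ⟨h1, h2⟩ | ⟨h1, h2⟩ | ⟨h1, h2⟩ <;>
        subst h1 <;> subst h2
    · exfalso; norm_num at hA
    · exact ⟨rfl, rfl⟩
    · exfalso; norm_num at hB
    · exfalso; norm_num at hB
    · exfalso; rw [hsq] at hB; norm_num at hB
    · exfalso; norm_num at hB
  · rintro ⟨h1, h2⟩
    subst h1; subst h2
    intro X Y Z
    simp only [he]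
    exact flat10 n hn X Y Z
end
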